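/- Let T ∈ ℕ, ε > 0. Let d : ℝ^p → ℝ be a differentiable convex function with Bregman distance ξ(x,y) := d(y) − d(x) − ⟨∇d(x), y − x⟩, with x_0 a minimizer of d. Let h : ℝ^p → ℝ be convex and for each t = 0,…,T let g_t : ℝ^p → ℝ be convex and differentiable. Let L_1,…,L_{T+1} > 0 and define φ_0(x) := ξ(x_0, x) and φ_{t+1}(x) := φ_t(x) + (1/(2L_{t+1}))·[g_t(x_t) + ⟨∇g_t(x_t), x − x_t⟩ + h(x)], where for each t the point x_{t+1} is a minimizer of φ_{t+1}. Suppose for each t = 0,…,T there is a point y_t with g_t(y_t) + h(y_t) ≤ (inf over x of [g_t(x_t) + ⟨∇g_t(x_t), x − x_t⟩ + 2L_{t+1}·ξ(x_t, x) + h(x)]) + ε/2. Then for every y ∈ ℝ^p, ∑_{t=0}^{T} (1/(2L_{t+1}))·[(g_t(y_t) + h(y_t)) − (g_t(y) + h(y))] ≤ (ε/4)·∑_{t=0}^{T} (1/L_{t+1}) + ξ(x_0, y). -/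

import Mathlib

open scoped InnerProductSpace
open Filter Set Topology

variable {E : Type*} [NormedAddCommGroup E] [InnerProductSpace ℝ E] [CompleteSpace E]

lemma dirSlope_tendsto (f : E → ℝ) (a v : E) (hf : DifferentiableAt ℝ f a) :
    Tendsto (fun lam : ℝ => (f (a + lam • v) - f a) / lam)
      (𝓝[>] (0:ℝ)) (𝓝 ⟪gradient f a, v⟫_ℝ) := by
  have hcurve : HasDerivAt (fun lam : ℝ => a + lam • v) v 0 := by
    simpa using ((hasDerivAt_id (0:ℝ)).smul_const v).const_add a
  have hq : HasDerivAt (fun lam : ℝ => f (a + lam • v)) (fderiv ℝ f a v) 0 := by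
    have hfa : HasFDerivAt f (fderiv ℝ f a) ((fun lam : ℝ => a + lam • v) 0) := by
      simpa using hf.hasFDerivAt
    exact hfa.comp_hasDerivAt 0 hcurve
  have hinner : ⟪gradient f a, v⟫_ℝ = fderiv ℝ f a v := by
    rw [gradient]; exact InnerProductSpace.toDual_symm_apply
  rw [hinner]
  have h1 := hasDerivAt_iff_tendsto_slope.mp hq
  have h2 : Tendsto (slope (fun lam : ℝ => f (a + lam • v)) 0) (𝓝[>] (0:ℝ))
      (𝓝 (fderiv ℝ f a v)) :=
    h1.mono_left (nhdsWithin_mono 0 (fun t ht => ne_of_gt ht))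
  refine h2.congr (fun t => ?_)
  simp [slope_def_field, div_eq_mul_inv, mul_comm]

lemma convex_grad_le (f : E → ℝ) (hconv : ConvexOn ℝ Set.univ f) {a : E}
    (hf : DifferentiableAt ℝ f a) (z : E) :
    f a + ⟪gradient f a, z - a⟫_ℝ ≤ f z := by
  have hT := dirSlope_tendsto f a (z - a) hf
  have hev : ∀ᶠ lam in 𝓝[>] (0:ℝ),
      (f (a + lam • (z - a)) - f a) / lam ≤ f z - f a := by
    filter_upwards [Ioc_mem_nhdsGT (zero_lt_one)] with lam hlam
    have hpt : a + lam • (z - a) = (1 - lam) • a + lam • z := by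
      rw [smul_sub, sub_smul, one_smul]; abel
    have hc := hconv.2 (Set.mem_univ a) (Set.mem_univ z)
      (by linarith [hlam.2] : (0:ℝ) ≤ 1 - lam) (le_of_lt hlam.1) (by ring)
    rw [div_le_iff₀ hlam.1, hpt]
    simp only [smul_eq_mul] at hc
    nlinarith [hc]
  have := le_of_tendsto hT hev
  linarith

lemma min_grad (d ψ : E → ℝ) (a : E) (hd : DifferentiableAt ℝ d a)
    (hψ : ConvexOn ℝ Set.univ ψ) (hmin : ∀ w, d a + ψ a ≤ d w + ψ w) (z : E) :
    ψ a ≤ ψ z + ⟪gradient d a, z - a⟫_ℝ := by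
  have hT := dirSlope_tendsto d a (z - a) hd
  have hev : ∀ᶠ lam in 𝓝[>] (0:ℝ),
      ψ a - ψ z ≤ (d (a + lam • (z - a)) - d a) / lam := by
    filter_upwards [Ioc_mem_nhdsGT (zero_lt_one)] with lam hlam
    have hpt : a + lam • (z - a) = (1 - lam) • a + lam • z := by
      rw [smul_sub, sub_smul, one_smul]; abel
    have hc := hψ.2 (Set.mem_univ a) (Set.mem_univ z)
      (by linarith [hlam.2] : (0:ℝ) ≤ 1 - lam) (le_of_lt hlam.1) (by ring)
    have hm := hmin (a + lam • (z - a))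
    rw [le_div_iff₀ hlam.1]
    rw [hpt] at hm ⊢
    simp only [smul_eq_mul] at hc
    nlinarith [hc, hm]
  have := ge_of_tendsto hT hev
  linarith

lemma inner_affine_convexOn (u : E) (c : ℝ) :
    ConvexOn ℝ Set.univ (fun w => ⟪u, w⟫_ℝ + c) := by
  refine ⟨convex_univ, ?_⟩
  intro p _ q _ α β hα hβ hab
  simp only [inner_add_right, real_inner_smul_right, smul_eq_mul]
  have hc : α * c + β * c = c := by rw [← add_mul, hab, one_mul]
  linarith

/-- Regret bound of the generic O-UDGM. With `d` differentiable convex having Bregman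
distance `ξ(x,y) = d(y) − d(x) − ⟨∇d(x), y − x⟩`, `x 0` a minimizer of `d`, `h` convex,
each `g t` convex differentiable, estimate functions
`φ_0(x) = ξ(x_0, x)`, `φ_{t+1}(x) = φ_t(x) + (1/(2L_{t+1}))[g_t(x_t) + ⟨∇g_t(x_t), x − x_t⟩ + h(x)]`,
`x (t+1)` a minimizer of `φ_{t+1}`, and `y t` satisfying
`g_t(y_t) + h(y_t) ≤ inf_x [g_t(x_t) + ⟨∇g_t(x_t), x − x_t⟩ + 2L_{t+1}ξ(x_t, x) + h(x)] + ε/2`,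
we have for every `y`:
`∑_{t=0}^{T} (1/(2L_{t+1}))[(g_t(y_t) + h(y_t)) − (g_t(y) + h(y))]
  ≤ (ε/4)∑_{t=0}^{T} (1/L_{t+1}) + ξ(x_0, y)`. -/
theorem statement11 {p : ℕ} (T : ℕ) (ε : ℝ) (hε : 0 < ε)
    (d : EuclideanSpace ℝ (Fin p) → ℝ) (hd : Differentiable ℝ d)
    (hdconv : ConvexOn ℝ Set.univ d)
    (xi : EuclideanSpace ℝ (Fin p) → EuclideanSpace ℝ (Fin p) → ℝ)
    (hxi : ∀ x y : EuclideanSpace ℝ (Fin p), xi x y = d y - d x - ⟪gradient d x, y - x⟫_ℝ)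
    (h : EuclideanSpace ℝ (Fin p) → ℝ) (hh : ConvexOn ℝ Set.univ h)
    (g : ℕ → EuclideanSpace ℝ (Fin p) → ℝ)
    (hgconv : ∀ t ≤ T, ConvexOn ℝ Set.univ (g t))
    (hgdiff : ∀ t ≤ T, Differentiable ℝ (g t))
    (L : ℕ → ℝ) (hL : ∀ t ≤ T, 0 < L (t + 1))
    (x : ℕ → EuclideanSpace ℝ (Fin p))
    (hx0 : ∀ z : EuclideanSpace ℝ (Fin p), d (x 0) ≤ d z)
    (φ : ℕ → EuclideanSpace ℝ (Fin p) → ℝ)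
    (hφ0 : ∀ z : EuclideanSpace ℝ (Fin p), φ 0 z = xi (x 0) z)
    (hφsucc : ∀ t ≤ T, ∀ z : EuclideanSpace ℝ (Fin p),
      φ (t + 1) z = φ t z
        + 1 / (2 * L (t + 1)) * (g t (x t) + ⟪gradient (g t) (x t), z - x t⟫_ℝ + h z))
    (hxmin : ∀ t ≤ T, ∀ z : EuclideanSpace ℝ (Fin p), φ (t + 1) (x (t + 1)) ≤ φ (t + 1) z)
    (y : ℕ → EuclideanSpace ℝ (Fin p))
    (hy : ∀ t ≤ T, ∀ z : EuclideanSpace ℝ (Fin p),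
      g t (y t) + h (y t) ≤ g t (x t) + ⟪gradient (g t) (x t), z - x t⟫_ℝ
        + 2 * L (t + 1) * xi (x t) z + h z + ε / 2) :
    ∀ z : EuclideanSpace ℝ (Fin p),
      ∑ t ∈ Finset.range (T + 1),
          1 / (2 * L (t + 1)) * ((g t (y t) + h (y t)) - (g t z + h z))
        ≤ ε / 4 * ∑ t ∈ Finset.range (T + 1), 1 / L (t + 1) + xi (x 0) z := by
  intro z
  -- gradient inequality for d and nonnegativity of xi
  have hgrad_d : ∀ a w : EuclideanSpace ℝ (Fin p),
      d a + ⟪gradient d a, w - a⟫_ℝ ≤ d w := fun a w => convex_grad_le d hdconv (hd a) w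
  have xi_nonneg : ∀ a w, 0 ≤ xi a w := by
    intro a w; rw [hxi]; have := hgrad_d a w; linarith
  -- convexity of φ t - d
  have psiconv : ∀ t, t ≤ T + 1 → ConvexOn ℝ Set.univ (fun w => φ t w - d w) := by
    intro t
    induction t with
    | zero =>
      intro _
      have heq : (fun w => φ 0 w - d w)
          = fun w => ⟪-(gradient d (x 0)), w⟫_ℝ
              + (⟪gradient d (x 0), x 0⟫_ℝ - d (x 0)) := by
        funext w
        rw [hφ0, hxi, inner_sub_right, inner_neg_left]
        ring
      rw [heq]; exact inner_affine_convexOn _ _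
    | succ s ih =>
      intro hs
      have hsT : s ≤ T := Nat.succ_le_succ_iff.mp hs
      have h1 := ih (hsT.trans (Nat.le_succ T))
      have heq : (fun w => φ (s + 1) w - d w)
          = (fun w => φ s w - d w)
            + (1 / (2 * L (s + 1))) • ((fun w => ⟪gradient (g s) (x s), w⟫_ℝ
                + (g s (x s) - ⟪gradient (g s) (x s), x s⟫_ℝ)) + h) := by
        funext w
        simp only [Pi.add_apply, Pi.smul_apply, smul_eq_mul]
        rw [hφsucc s hsT w, inner_sub_right]
        ring
      rw [heq]
      have h2L : (0:ℝ) ≤ 1 / (2 * L (s + 1)) := by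
        have := hL s hsT; positivity
      exact h1.add (((inner_affine_convexOn _ _).add hh).smul h2L)
  -- Bregman inequality at minimizers
  have breg : ∀ t, t ≤ T + 1 → ∀ w, φ t (x t) + xi (x t) w ≤ φ t w := by
    intro t ht w
    match t with
    | 0 =>
      rw [hφ0, hφ0, hxi, hxi]
      simp
    | Nat.succ s =>
      have hsT : s ≤ T := Nat.succ_le_succ_iff.mp ht
      have hmin : ∀ u, d (x (s + 1)) + (φ (s + 1) (x (s + 1)) - d (x (s + 1)))
          ≤ d u + (φ (s + 1) u - d u) := by
        intro u; simpa using hxmin s hsT u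
      have := min_grad d (fun w => φ (s + 1) w - d w) (x (s + 1)) (hd _)
        (psiconv (s + 1) ht) hmin w
      rw [hxi]
      linarith
  -- lower bound induction
  have lower : ∀ t, t ≤ T + 1 → ∀ w,
      (∑ s ∈ Finset.range t, 1 / (2 * L (s + 1)) * (g s (y s) + h (y s) - ε / 2))
        + xi (x t) w ≤ φ t w := by
    intro t
    induction t with
    | zero => intro _ w; simp [hφ0 w]
    | succ s ih =>
      intro hs w
      have hsT : s ≤ T := Nat.succ_le_succ_iff.mp hs
      have hLs := hL s hsT
      have ihx := ih (hsT.trans (Nat.le_succ T)) (x (s + 1))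
      have hy' := hy s hsT (x (s + 1))
      have hφx := hφsucc s hsT (x (s + 1))
      have hb := breg (s + 1) hs w
      rw [Finset.sum_range_succ]
      have h2L : (0:ℝ) < 2 * L (s + 1) := by linarith
      have hxi2 : 1 / (2 * L (s + 1)) * (2 * L (s + 1) * xi (x s) (x (s + 1)))
          = xi (x s) (x (s + 1)) := by field_simp
      have m : 1 / (2 * L (s + 1)) * (g s (y s) + h (y s) - ε / 2)
          ≤ 1 / (2 * L (s + 1)) * (g s (x s)
              + ⟪gradient (g s) (x s), x (s + 1) - x s⟫_ℝ + h (x (s + 1)))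
            + xi (x s) (x (s + 1)) := by
        have hmul := mul_le_mul_of_nonneg_left
          (show g s (y s) + h (y s) - ε / 2
              ≤ g s (x s) + ⟪gradient (g s) (x s), x (s + 1) - x s⟫_ℝ
                + 2 * L (s + 1) * xi (x s) (x (s + 1)) + h (x (s + 1)) by linarith)
          (le_of_lt (one_div_pos.mpr h2L))
        calc 1 / (2 * L (s + 1)) * (g s (y s) + h (y s) - ε / 2)
            ≤ 1 / (2 * L (s + 1)) * (g s (x s)
                + ⟪gradient (g s) (x s), x (s + 1) - x s⟫_ℝ
                + 2 * L (s + 1) * xi (x s) (x (s + 1)) + h (x (s + 1))) := hmul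
          _ = 1 / (2 * L (s + 1)) * (g s (x s)
                + ⟪gradient (g s) (x s), x (s + 1) - x s⟫_ℝ + h (x (s + 1)))
              + 1 / (2 * L (s + 1)) * (2 * L (s + 1) * xi (x s) (x (s + 1))) := by ring
          _ = _ := by rw [hxi2]
      linarith
  -- upper bound induction
  have upper : ∀ t, t ≤ T + 1 → ∀ w, φ t w
      ≤ xi (x 0) w + ∑ s ∈ Finset.range t, 1 / (2 * L (s + 1)) * (g s w + h w) := by
    intro t
    induction t with
    | zero => intro _ w; simp [hφ0 w]
    | succ s ih =>
      intro hs w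
      have hsT : s ≤ T := Nat.succ_le_succ_iff.mp hs
      have hLs := hL s hsT
      have ihw := ih (hsT.trans (Nat.le_succ T)) w
      have hg := convex_grad_le (g s) (hgconv s hsT) (hgdiff s hsT (x s)) w
      have h2L : (0:ℝ) ≤ 1 / (2 * L (s + 1)) := by positivity
      have hmul := mul_le_mul_of_nonneg_left
        (show g s (x s) + ⟪gradient (g s) (x s), w - x s⟫_ℝ + h w ≤ g s w + h w by linarith)
        h2L
      rw [hφsucc s hsT w, Finset.sum_range_succ]
      linarith
  -- combine
  have final := lower (T + 1) le_rfl z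
  have up := upper (T + 1) le_rfl z
  have hxiT := xi_nonneg (x (T + 1)) z
  have keyle : (∑ s ∈ Finset.range (T + 1),
      1 / (2 * L (s + 1)) * (g s (y s) + h (y s) - ε / 2))
      ≤ xi (x 0) z + ∑ s ∈ Finset.range (T + 1), 1 / (2 * L (s + 1)) * (g s z + h z) := by
    linarith
  have expand : ∑ t ∈ Finset.range (T + 1),
        1 / (2 * L (t + 1)) * ((g t (y t) + h (y t)) - (g t z + h z))
      = (∑ t ∈ Finset.range (T + 1),
          1 / (2 * L (t + 1)) * (g t (y t) + h (y t) - ε / 2))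
        - (∑ t ∈ Finset.range (T + 1), 1 / (2 * L (t + 1)) * (g t z + h z))
        + ε / 4 * ∑ t ∈ Finset.range (T + 1), 1 / L (t + 1) := by
    rw [Finset.mul_sum, ← Finset.sum_sub_distrib, ← Finset.sum_add_distrib]
    apply Finset.sum_congr rfl
    intro t ht
    have hLt : 0 < L (t + 1) := hL t (Nat.lt_succ_iff.mp (Finset.mem_range.mp ht))
    have hne : L (t + 1) ≠ 0 := ne_of_gt hLt
    field_simp
    ring
  rw [expand]
  linarith
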